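/- The infinite binary word w = (01)¹ 1 (10)² 0 (01)³ 1 (10)⁴ 0 … (01)^{2i−1} 1 (10)^{2i} 0 … has bounded width but is not bounded weakly abelian periodic (i.e., it admits no WAP factorization with uniformly bounded block lengths). -/

import Mathlib

open Filter Topology

/-- Number of 1's (`true`) in the length-`n` prefix of the infinite binary word `w`. -/
def ones (w : ℕ → Bool) (n : ℕ) : ℕ :=
  ((Finset.range n).filter (fun i => w i = true)).card

/-- Number of 0's (`false`) in the length-`n` prefix of `w`. -/
def zeros (w : ℕ → Bool) (n : ℕ) : ℕ := n - ones w n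

/-- The graphic of `w`: `g_w(n) = |pref_n(w)|₁ - |pref_n(w)|₀`. -/
def graphic (w : ℕ → Bool) (n : ℕ) : ℤ := (ones w n : ℤ) - (zeros w n : ℤ)

/-- `w` is weakly abelian periodic with frequency `ρ` of the letter 1 in the blocks:
there is a factorization `w = v₀v₁v₂⋯` (cut points `k 0 < k 1 < ⋯`, with `v₀` the
prefix of length `k 0`) such that each block `vᵢ = w[k i, k (i+1))`, `i ≥ 1`,
has frequency `ρ` of the letter 1. -/
def WAPwith (w : ℕ → Bool) (ρ : ℚ) : Prop :=
  ∃ k : ℕ → ℕ, StrictMono k ∧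
    ∀ i : ℕ, ((ones w (k (i+1)) : ℚ) - (ones w (k i) : ℚ))
      = ρ * ((k (i+1) : ℚ) - (k i : ℚ))

/-- `w` is weakly abelian periodic. -/
def WAP (w : ℕ → Bool) : Prop := ∃ ρ : ℚ, WAPwith w ρ

/-- `w` is bounded weakly abelian periodic: WAP with blocks of uniformly bounded length. -/
def BoundedWAP (w : ℕ → Bool) : Prop :=
  ∃ (ρ : ℚ) (k : ℕ → ℕ) (C : ℕ), StrictMono k ∧ (∀ i, k (i+1) - k i ≤ C) ∧
    ∀ i : ℕ, ((ones w (k (i+1)) : ℚ) - (ones w (k i) : ℚ))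
      = ρ * ((k (i+1) : ℚ) - (k i : ℚ))

/-- `w` has bounded width: its graphic lies between two parallel lines with
rational coefficients. -/
def BoundedWidth (w : ℕ → Bool) : Prop :=
  ∃ a b₁ b₂ : ℚ, ∀ n : ℕ,
    a * n + b₁ ≤ (graphic w n : ℚ) ∧ (graphic w n : ℚ) ≤ a * n + b₂

/-- The `i`-th block of the word `(01)¹1 (10)²0 (01)³1 (10)⁴0 ⋯`:
for odd `i` it is `(01)^i 1`, for even `i` it is `(10)^i 0`; it has length `2i+1`. -/
def exBlock (i : ℕ) : List Bool :=
  if i % 2 = 1 then (List.replicate i [false, true]).flatten ++ [true]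
  else (List.replicate i [true, false]).flatten ++ [false]

/- ## Auxiliary lemmas -/

lemma ones_succ (w : ℕ → Bool) (n : ℕ) :
    ones w (n+1) = ones w n + (if w n then 1 else 0) := by
  unfold ones
  rw [Finset.range_add_one, Finset.filter_insert]
  by_cases h : w n = true
  · rw [if_pos h, Finset.card_insert_of_notMem (by simp), if_pos h]
  · rw [if_neg h, if_neg (by simpa using h), add_zero]

lemma ones_le (w : ℕ → Bool) (n : ℕ) : ones w n ≤ n := by
  calc ones w n ≤ (Finset.range n).card := Finset.card_filter_le _ _
  _ = n := Finset.card_range n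

lemma graphic_eq (w : ℕ → Bool) (n : ℕ) :
    graphic w n = 2 * (ones w n : ℤ) - n := by
  unfold graphic zeros
  rw [Nat.cast_sub (ones_le w n)]; ring

lemma graphic_succ (w : ℕ → Bool) (n : ℕ) :
    graphic w (n+1) = graphic w n + (if w n then 1 else -1) := by
  rw [graphic_eq, graphic_eq, ones_succ]
  by_cases h : w n <;> simp [h] <;> push_cast <;> ring

/-- Closed form of the graphic of our word. -/
def G (n : ℕ) : ℤ :=
  if (Nat.sqrt (n+1)) % 2 = 1 then
    (if (n + 1 - Nat.sqrt (n+1) ^ 2) % 2 = 0 then 0 else -1)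
  else
    (if (n + 1 - Nat.sqrt (n+1) ^ 2) % 2 = 0 then 1 else 2)

lemma G_lb (n : ℕ) : -1 ≤ G n := by unfold G; split_ifs <;> norm_num

lemma G_ub (n : ℕ) : G n ≤ 2 := by unfold G; split_ifs <;> norm_num

lemma getD_flatten_replicate (a b : Bool) : ∀ (j r : ℕ), r < 2*j →
    ((List.replicate j [a,b]).flatten).getD r false = if r % 2 = 0 then a else b := by
  intro j
  induction j with
  | zero => intro r hr; omega
  | succ j ih =>
    intro r hr
    rw [List.replicate_succ, List.flatten_cons]
    match r with
    | 0 => simp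
    | 1 => simp
    | (r+2) =>
      have h2 : ([a,b] : List Bool).length ≤ r + 2 := by simp
      rw [List.getD_append_right _ _ _ _ h2,
        show r + 2 - ([a,b] : List Bool).length = r from by simp,
        ih r (by omega), show (r+2) % 2 = r % 2 from by omega]

lemma len_flatten_replicate (a b : Bool) (j : ℕ) :
    ((List.replicate j [a,b]).flatten).length = 2*j := by
  simp [List.length_flatten, List.map_replicate, List.sum_replicate, Nat.smul_one_eq_cast]
  ring

lemma exBlock_getD (j r : ℕ) (hr : r < 2*j+1) :
    (exBlock j).getD r false =
      (if r = 2*j then decide (j % 2 = 1) else decide (r % 2 = j % 2)) := by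
  rcases eq_or_lt_of_le (Nat.lt_succ_iff.mp hr) with he | hlt
  · rw [if_pos he, he]
    unfold exBlock
    rcases Nat.mod_two_eq_zero_or_one j with hj | hj
    · rw [if_neg (by omega),
        List.getD_append_right _ _ _ _ (by rw [len_flatten_replicate]),
        len_flatten_replicate]
      simp [hj]
    · rw [if_pos hj,
        List.getD_append_right _ _ _ _ (by rw [len_flatten_replicate]),
        len_flatten_replicate]
      simp [hj]
  · rw [if_neg (by omega)]
    unfold exBlock
    rcases Nat.mod_two_eq_zero_or_one j with hj | hj
    · rw [if_neg (by omega),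
        List.getD_append _ _ _ _ (by rw [len_flatten_replicate]; omega),
        getD_flatten_replicate _ _ _ _ hlt, hj]
      rcases Nat.mod_two_eq_zero_or_one r with hrp | hrp <;> simp [hrp]
    · rw [if_pos hj,
        List.getD_append _ _ _ _ (by rw [len_flatten_replicate]; omega),
        getD_flatten_replicate _ _ _ _ hlt, hj]
      rcases Nat.mod_two_eq_zero_or_one r with hrp | hrp <;> simp [hrp]

lemma G_step (n : ℕ) :
    G n + (if (if n + 1 - (Nat.sqrt (n+1))^2 = 2 * Nat.sqrt (n+1)
              then decide (Nat.sqrt (n+1) % 2 = 1)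
              else decide ((n + 1 - (Nat.sqrt (n+1))^2) % 2 = Nat.sqrt (n+1) % 2)) = true
           then (1:ℤ) else -1) = G (n+1) := by
  have h1 : (Nat.sqrt (n+1))^2 ≤ n+1 := Nat.sqrt_le' (n+1)
  have h2 : n+1 < (Nat.sqrt (n+1)+1)^2 := Nat.lt_succ_sqrt' (n+1)
  set j := Nat.sqrt (n+1) with hjdef
  have hexp : (j+1)^2 = j^2+2*j+1 := by ring
  have hj1 : 1 ≤ j := Nat.sqrt_pos.mpr (by omega)
  rcases eq_or_lt_of_le (show n+1-j^2 ≤ 2*j by omega) with he | hlt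
  · -- end of block j
    have hn2 : n+1+1 = (j+1)^2 := by omega
    have hsq2 : Nat.sqrt (n+1+1) = j+1 := by rw [hn2, Nat.sqrt_eq']
    rw [if_pos he]
    unfold G
    rw [hsq2, ← hjdef]
    have e0 : n+1+1 - (j+1)^2 = 0 := by omega
    rw [e0, he]
    rcases Nat.mod_two_eq_zero_or_one j with hj | hj
    · have hj2 : (j+1) % 2 = 1 := by omega
      norm_num [hj, hj2, Nat.mul_mod_right]
    · have hj2 : (j+1) % 2 = 0 := by omega
      norm_num [hj, hj2, Nat.mul_mod_right]
  · -- interior of block j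
    have hsum : n+1+1 = j^2 + (n+1-j^2+1) := by omega
    have hsq2 : Nat.sqrt (n+1+1) = j := by
      rw [hsum]; exact Nat.sqrt_add_eq' j (by omega)
    rw [if_neg (by omega : ¬(n+1-j^2 = 2*j))]
    unfold G
    rw [hsq2, ← hjdef]
    have e1 : n+1+1 - j^2 = (n+1-j^2)+1 := by omega
    rw [e1]
    rcases Nat.mod_two_eq_zero_or_one j with hj | hj <;>
      rcases Nat.mod_two_eq_zero_or_one (n+1-j^2) with hp | hp
    · have hp1 : (n+1-j^2+1) % 2 = 1 := by omega
      norm_num [hj, hp, hp1]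
    · have hp1 : (n+1-j^2+1) % 2 = 0 := by omega
      norm_num [hj, hp, hp1]
    · have hp1 : (n+1-j^2+1) % 2 = 1 := by omega
      norm_num [hj, hp, hp1]
    · have hp1 : (n+1-j^2+1) % 2 = 0 := by omega
      norm_num [hj, hp, hp1]

section Main

variable (w : ℕ → Bool)

lemma letter_eq
    (hw : ∀ i, 1 ≤ i → ∀ l, l < 2 * i + 1 → w (i ^ 2 - 1 + l) = (exBlock i).getD l false)
    (n : ℕ) :
    w n = (if n + 1 - (Nat.sqrt (n+1))^2 = 2 * Nat.sqrt (n+1)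
           then decide (Nat.sqrt (n+1) % 2 = 1)
           else decide ((n + 1 - (Nat.sqrt (n+1))^2) % 2 = Nat.sqrt (n+1) % 2)) := by
  have h1 : (Nat.sqrt (n+1))^2 ≤ n+1 := Nat.sqrt_le' (n+1)
  have h2 : n+1 < (Nat.sqrt (n+1)+1)^2 := Nat.lt_succ_sqrt' (n+1)
  set j := Nat.sqrt (n+1) with hjdef
  have hexp : (j+1)^2 = j^2+2*j+1 := by ring
  have hj1 : 1 ≤ j := Nat.sqrt_pos.mpr (by omega)
  have hs3 : 1 ≤ j^2 := Nat.one_le_pow _ _ (by omega)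
  have hrlt : n + 1 - j^2 < 2*j+1 := by omega
  have hneq : j^2 - 1 + (n+1-j^2) = n := by omega
  have hwn := hw j hj1 (n+1-j^2) hrlt
  rw [hneq] at hwn
  rw [hwn, exBlock_getD j _ hrlt]

lemma graphic_eq_G
    (hw : ∀ i, 1 ≤ i → ∀ l, l < 2 * i + 1 → w (i ^ 2 - 1 + l) = (exBlock i).getD l false) :
    ∀ n, graphic w n = G n := by
  intro n
  induction n with
  | zero =>
    have h0 : G 0 = 0 := by decide
    rw [h0]
    simp [graphic, ones, zeros]
  | succ n ih =>
    rw [graphic_succ, ih, letter_eq w hw n]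
    exact G_step n

end Main

lemma strictMono_ge (k : ℕ → ℕ) (hk : StrictMono k) (i : ℕ) : k 0 + i ≤ k i := by
  induction i with
  | zero => simp
  | succ i ih => have h := hk (show i < i + 1 by omega); omega

lemma telescope (w : ℕ → Bool) (ρ : ℚ) (k : ℕ → ℕ)
    (hrel : ∀ i : ℕ, ((ones w (k (i+1)) : ℚ) - (ones w (k i) : ℚ))
      = ρ * ((k (i+1) : ℚ) - (k i : ℚ))) :
    ∀ i, (ones w (k i) : ℚ) - ones w (k 0) = ρ * ((k i : ℚ) - k 0) := by
  intro i
  induction i with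
  | zero => simp
  | succ i ih =>
    have h := hrel i
    have e : (k (i+1) : ℚ) - k 0 = ((k (i+1) : ℚ) - k i) + ((k i : ℚ) - k 0) := by ring
    rw [e, mul_add, ← h, ← ih]
    ring

/-- The word `w = (01)¹ 1 (10)² 0 (01)³ 1 (10)⁴ 0 ⋯ (01)^{2i-1} 1 (10)^{2i} 0 ⋯`
(block `i` starts at position `i² - 1`, 0-indexed) has bounded width but is not
bounded weakly abelian periodic. -/
theorem boundedWidth_not_boundedWAP (w : ℕ → Bool)
    (hw : ∀ i, 1 ≤ i → ∀ l, l < 2 * i + 1 → w (i ^ 2 - 1 + l) = (exBlock i).getD l false) :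
    BoundedWidth w ∧ ¬ BoundedWAP w := by
  have hG : ∀ n, graphic w n = G n := graphic_eq_G w hw
  constructor
  · refine ⟨0, -1, 2, fun n => ⟨?_, ?_⟩⟩
    · have h := G_lb n
      have h' : ((-1 : ℤ) : ℚ) ≤ ((G n : ℤ) : ℚ) := Int.cast_le.mpr h
      rw [hG n]
      push_cast at h' ⊢
      linarith
    · have h := G_ub n
      have h' : ((G n : ℤ) : ℚ) ≤ ((2 : ℤ) : ℚ) := Int.cast_le.mpr h
      rw [hG n]
      push_cast at h' ⊢
      linarith
  · rintro ⟨ρ, k, C, hk, hC, hrel⟩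
    have hgq : ∀ n : ℕ, (graphic w n : ℚ) = 2 * (ones w n : ℚ) - n := fun n => by
      rw [graphic_eq]; push_cast; ring
    have htel : ∀ i, (graphic w (k i) : ℚ) - (graphic w (k 0) : ℚ)
        = (2*ρ - 1) * ((k i : ℚ) - k 0) := by
      intro i
      have h := telescope w ρ k hrel i
      rw [hgq, hgq]
      linear_combination 2 * h
    have hrho : ρ = 1/2 := by
      by_contra hne
      have hpos : (0:ℚ) < |2*ρ - 1| := abs_pos.mpr (fun h0 => hne (by linarith))
      obtain ⟨i, hi⟩ := exists_nat_gt (3 / |2*ρ-1|)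
      have hki : (i : ℚ) ≤ (k i : ℚ) - k 0 := by
        have h := strictMono_ge k hk i
        have h' : ((k 0 + i : ℕ) : ℚ) ≤ ((k i : ℕ) : ℚ) := Nat.cast_le.mpr h
        push_cast at h'
        linarith
      have hb : |(graphic w (k i) : ℚ) - (graphic w (k 0) : ℚ)| ≤ 3 := by
        have l1 := G_lb (k i); have u1 := G_ub (k i)
        have l0 := G_lb (k 0); have u0 := G_ub (k 0)
        rw [hG (k i), hG (k 0), abs_le]
        constructor
        · have hz : (-3 : ℤ) ≤ G (k i) - G (k 0) := by omega
          have hq : ((-3 : ℤ) : ℚ) ≤ ((G (k i) : ℚ)) - ((G (k 0) : ℚ)) := by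
            exact_mod_cast hz
          push_cast at hq
          linarith
        · have hz : G (k i) - G (k 0) ≤ (3 : ℤ) := by omega
          have hq : ((G (k i) : ℚ)) - ((G (k 0) : ℚ)) ≤ ((3 : ℤ) : ℚ) := by
            exact_mod_cast hz
          push_cast at hq
          linarith
      rw [htel i, abs_mul] at hb
      have h3 : |((k i : ℚ) - k 0)| = (k i : ℚ) - k 0 :=
        abs_of_nonneg (by have h0 : (0:ℚ) ≤ (i:ℚ) := Nat.cast_nonneg i; linarith)
      rw [h3] at hb
      have h4 : 3 < |2*ρ-1| * i := by
        rw [div_lt_iff₀ hpos] at hi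
        linarith [mul_comm (i:ℚ) |2*ρ-1|]
      have h5 : |2*ρ-1| * (i:ℚ) ≤ |2*ρ-1| * ((k i : ℚ) - k 0) :=
        mul_le_mul_of_nonneg_left hki (le_of_lt hpos)
      linarith
    have hconst : ∀ i, graphic w (k i) = graphic w (k 0) := by
      intro i
      have h := htel i
      rw [hrho] at h
      norm_num at h
      have h2 : ((graphic w (k i) : ℚ)) = ((graphic w (k 0) : ℚ)) := by linarith
      exact_mod_cast h2
    -- parity of the sqrt is determined by the value of G
    have parG : ∀ m n : ℕ, G m = G n → Nat.sqrt (m+1) % 2 = Nat.sqrt (n+1) % 2 := by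
      intro m n h
      unfold G at h
      rcases Nat.mod_two_eq_zero_or_one (Nat.sqrt (m+1)) with h1 | h1 <;>
        rcases Nat.mod_two_eq_zero_or_one (Nat.sqrt (n+1)) with h2 | h2 <;>
        rw [h1, h2] <;> rw [h1, h2] at h <;> norm_num at h <;>
        split_ifs at h <;> omega
    set p := Nat.sqrt (k 0 + 1) % 2 with hp
    have hp2 : p < 2 := Nat.mod_lt _ (by norm_num)
    set j := 2 * (C + k 0 + 2) + (1 - p) with hj
    have hjpar : j % 2 ≠ p := by omega
    have hexp : (j+1)^2 = j^2+2*j+1 := by ring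
    have hjsq : j ≤ j^2 := Nat.le_self_pow (by norm_num) j
    have hjk0 : k 0 < j^2 - 1 := by omega
    have hex : ∃ i, j^2 - 1 ≤ k i :=
      ⟨j^2, le_trans (by omega) (strictMono_ge k hk (j^2))⟩
    have hi : j^2 - 1 ≤ k (Nat.find hex) := Nat.find_spec hex
    have hi0 : Nat.find hex ≠ 0 := by
      intro h0
      rw [h0] at hi
      omega
    obtain ⟨m, hm1⟩ : ∃ m, Nat.find hex = m + 1 := ⟨Nat.find hex - 1, by omega⟩
    rw [hm1] at hi
    have hm : k m < j^2 - 1 := by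
      have := Nat.find_min hex (show m < Nat.find hex by omega)
      omega
    have hpar : Nat.sqrt (k (m+1) + 1) % 2 = p := by
      have hGG : G (k (m+1)) = G (k 0) := by
        rw [← hG, ← hG]; exact hconst (m+1)
      exact parG (k (m+1)) (k 0) hGG
    have hnotin : ¬ (k (m+1) < (j+1)^2 - 1) := by
      intro hlt
      have hsq : Nat.sqrt (k (m+1)+1) = j := by
        have hle : j^2 ≤ k (m+1)+1 := by omega
        have h2 : k (m+1)+1 - j^2 ≤ j + j := by omega
        calc Nat.sqrt (k (m+1)+1) = Nat.sqrt (j^2 + (k (m+1)+1 - j^2)) := by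
              rw [Nat.add_sub_cancel' hle]
        _ = j := Nat.sqrt_add_eq' j h2
      rw [hsq] at hpar
      exact hjpar hpar
    have hgap := hC m
    omega
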